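/- Let F be a field and a, b ∈ F satisfying Condition (i) and Condition (ii), and let x, y be the 7×7 matrices of the dimension-7 setup. Then the group generated by x and y is not monomial: there is no basis (v₁,…,v₇) of F⁷ such that for each i there exist an index j and a scalar λ with x·vᵢ = λ·vⱼ, and for each i there exist an index j and a scalar μ with y·vᵢ = μ·vⱼ. -/

import Mathlib

open Matrix

namespace Dim7Aux
variable {F : Type} [Field F]

lemma v7_0 {α : Type*} (x0 x1 x2 x3 x4 x5 x6 : α) : ![x0,x1,x2,x3,x4,x5,x6] (0 : Fin 7) = x0 := rfl
lemma v7_1 {α : Type*} (x0 x1 x2 x3 x4 x5 x6 : α) : ![x0,x1,x2,x3,x4,x5,x6] (1 : Fin 7) = x1 := rfl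
lemma v7_2 {α : Type*} (x0 x1 x2 x3 x4 x5 x6 : α) : ![x0,x1,x2,x3,x4,x5,x6] (2 : Fin 7) = x2 := rfl
lemma v7_3 {α : Type*} (x0 x1 x2 x3 x4 x5 x6 : α) : ![x0,x1,x2,x3,x4,x5,x6] (3 : Fin 7) = x3 := rfl
lemma v7_4 {α : Type*} (x0 x1 x2 x3 x4 x5 x6 : α) : ![x0,x1,x2,x3,x4,x5,x6] (4 : Fin 7) = x4 := rfl
lemma v7_5 {α : Type*} (x0 x1 x2 x3 x4 x5 x6 : α) : ![x0,x1,x2,x3,x4,x5,x6] (5 : Fin 7) = x5 := rfl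
lemma v7_6 {α : Type*} (x0 x1 x2 x3 x4 x5 x6 : α) : ![x0,x1,x2,x3,x4,x5,x6] (6 : Fin 7) = x6 := rfl
lemma v7m_0 {α : Type*} (x0 x1 x2 x3 x4 x5 x6 : α) (h : 0 < 7) : ![x0,x1,x2,x3,x4,x5,x6] ⟨0,h⟩ = x0 := rfl
lemma v7m_1 {α : Type*} (x0 x1 x2 x3 x4 x5 x6 : α) (h : 1 < 7) : ![x0,x1,x2,x3,x4,x5,x6] ⟨1,h⟩ = x1 := rfl
lemma v7m_2 {α : Type*} (x0 x1 x2 x3 x4 x5 x6 : α) (h : 2 < 7) : ![x0,x1,x2,x3,x4,x5,x6] ⟨2,h⟩ = x2 := rfl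
lemma v7m_3 {α : Type*} (x0 x1 x2 x3 x4 x5 x6 : α) (h : 3 < 7) : ![x0,x1,x2,x3,x4,x5,x6] ⟨3,h⟩ = x3 := rfl
lemma v7m_4 {α : Type*} (x0 x1 x2 x3 x4 x5 x6 : α) (h : 4 < 7) : ![x0,x1,x2,x3,x4,x5,x6] ⟨4,h⟩ = x4 := rfl
lemma v7m_5 {α : Type*} (x0 x1 x2 x3 x4 x5 x6 : α) (h : 5 < 7) : ![x0,x1,x2,x3,x4,x5,x6] ⟨5,h⟩ = x5 := rfl
lemma v7m_6 {α : Type*} (x0 x1 x2 x3 x4 x5 x6 : α) (h : 6 < 7) : ![x0,x1,x2,x3,x4,x5,x6] ⟨6,h⟩ = x6 := rfl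


lemma fm0 (h : 0 < 7) : (⟨0,h⟩ : Fin 7) = 0 := rfl
lemma fm1 (h : 1 < 7) : (⟨1,h⟩ : Fin 7) = 1 := rfl
lemma fm2 (h : 2 < 7) : (⟨2,h⟩ : Fin 7) = 2 := rfl
lemma fm3 (h : 3 < 7) : (⟨3,h⟩ : Fin 7) = 3 := rfl
lemma fm4 (h : 4 < 7) : (⟨4,h⟩ : Fin 7) = 4 := rfl
lemma fm5 (h : 5 < 7) : (⟨5,h⟩ : Fin 7) = 5 := rfl
lemma fm6 (h : 6 < 7) : (⟨6,h⟩ : Fin 7) = 6 := rfl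

lemma xmul (a : F) (w : Fin 7 → F) :
    Matrix.mulVec !![0,1,0,0,0,0,a; 1,0,0,0,0,0,a; 0,0,0,1,0,0,0; 0,0,1,0,0,0,0;
      0,0,0,0,0,1,-1; 0,0,0,0,1,0,-1; 0,0,0,0,0,0,-1] w =
    ![w 1 + a * w 6, w 0 + a * w 6, w 3, w 2, w 5 - w 6, w 4 - w 6, -w 6] := by
  funext j
  fin_cases j <;>
    (simp only [Matrix.mulVec, dotProduct, Fin.sum_univ_seven, v7_0, v7_1, v7_2, v7_3, v7_4, v7_5, v7_6, v7m_0, v7m_1, v7m_2, v7m_3, v7m_4, v7m_5, v7m_6, Matrix.of_apply, Pi.add_apply, Pi.sub_apply, Pi.smul_apply, Pi.neg_apply, smul_eq_mul, fm0, fm1, fm2, fm3, fm4, fm5, fm6]; try ring)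

lemma ymul (a b : F) (w : Fin 7 → F) :
    Matrix.mulVec !![1,0,-1,0,-1,0,a+b-1; 0,0,-1,0,0,0,0; 0,1,-1,0,0,0,0; 0,0,0,0,-1,0,0;
      0,0,0,1,-1,0,0; 0,0,0,0,0,0,-1; 0,0,0,0,0,1,-1] w =
    ![w 0 - w 2 - w 4 + (a+b-1) * w 6, -w 2, w 1 - w 2, -w 4, w 3 - w 4, -w 6, w 5 - w 6] := by
  funext j
  fin_cases j <;>
    (simp only [Matrix.mulVec, dotProduct, Fin.sum_univ_seven, v7_0, v7_1, v7_2, v7_3, v7_4, v7_5, v7_6, v7m_0, v7m_1, v7m_2, v7m_3, v7m_4, v7m_5, v7m_6, Matrix.of_apply, Pi.add_apply, Pi.sub_apply, Pi.smul_apply, Pi.neg_apply, smul_eq_mul, fm0, fm1, fm2, fm3, fm4, fm5, fm6]; try ring)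

lemma xx (a : F) (w : Fin 7 → F) :
    Matrix.mulVec !![0,1,0,0,0,0,a; 1,0,0,0,0,0,a; 0,0,0,1,0,0,0; 0,0,1,0,0,0,0;
      0,0,0,0,0,1,-1; 0,0,0,0,1,0,-1; 0,0,0,0,0,0,-1] (Matrix.mulVec !![0,1,0,0,0,0,a; 1,0,0,0,0,0,a; 0,0,0,1,0,0,0; 0,0,1,0,0,0,0;
      0,0,0,0,0,1,-1; 0,0,0,0,1,0,-1; 0,0,0,0,0,0,-1] w) = w := by
  rw [xmul, xmul]
  funext j
  fin_cases j <;> (simp only [v7_0, v7_1, v7_2, v7_3, v7_4, v7_5, v7_6, v7m_0, v7m_1, v7m_2, v7m_3, v7m_4, v7m_5, v7m_6, Matrix.of_apply, Pi.add_apply, Pi.sub_apply, Pi.smul_apply, Pi.neg_apply, smul_eq_mul, fm0, fm1, fm2, fm3, fm4, fm5, fm6]; try ring)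

lemma yyy (a b : F) (w : Fin 7 → F) :
    Matrix.mulVec !![1,0,-1,0,-1,0,a+b-1; 0,0,-1,0,0,0,0; 0,1,-1,0,0,0,0; 0,0,0,0,-1,0,0;
      0,0,0,1,-1,0,0; 0,0,0,0,0,0,-1; 0,0,0,0,0,1,-1] (Matrix.mulVec !![1,0,-1,0,-1,0,a+b-1; 0,0,-1,0,0,0,0; 0,1,-1,0,0,0,0; 0,0,0,0,-1,0,0;
      0,0,0,1,-1,0,0; 0,0,0,0,0,0,-1; 0,0,0,0,0,1,-1] (Matrix.mulVec !![1,0,-1,0,-1,0,a+b-1; 0,0,-1,0,0,0,0; 0,1,-1,0,0,0,0; 0,0,0,0,-1,0,0;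
      0,0,0,1,-1,0,0; 0,0,0,0,0,0,-1; 0,0,0,0,0,1,-1] w)) = w := by
  rw [ymul, ymul, ymul]
  funext j
  fin_cases j <;> (simp only [v7_0, v7_1, v7_2, v7_3, v7_4, v7_5, v7_6, v7m_0, v7m_1, v7m_2, v7m_3, v7m_4, v7m_5, v7m_6, Matrix.of_apply, Pi.add_apply, Pi.sub_apply, Pi.smul_apply, Pi.neg_apply, smul_eq_mul, fm0, fm1, fm2, fm3, fm4, fm5, fm6]; try ring)

def Tact (a b : F) (w : Fin 7 → F) : Fin 7 → F :=
  Matrix.mulVec !![0,1,0,0,0,0,a; 1,0,0,0,0,0,a; 0,0,0,1,0,0,0; 0,0,1,0,0,0,0;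
      0,0,0,0,0,1,-1; 0,0,0,0,1,0,-1; 0,0,0,0,0,0,-1] (Matrix.mulVec !![1,0,-1,0,-1,0,a+b-1; 0,0,-1,0,0,0,0; 0,1,-1,0,0,0,0; 0,0,0,0,-1,0,0;
      0,0,0,1,-1,0,0; 0,0,0,0,0,0,-1; 0,0,0,0,0,1,-1] w)

lemma Tact_smul (a b r : F) (w : Fin 7 → F) : Tact a b (r • w) = r • Tact a b w := by
  unfold Tact; rw [Matrix.mulVec_smul, Matrix.mulVec_smul]

lemma t1 (a b : F) (w : Fin 7 → F) : Tact a b w = ![(-1)*w 2 + (a)*w 5 + (-1*a)*w 6,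
      w 0 + (-1)*w 2 + (-1)*w 4 + (a)*w 5 + (-1+b)*w 6,
      (-1)*w 4,
      w 1 + (-1)*w 2,
      (-1)*w 5,
      w 3 + (-1)*w 4 + (-1)*w 5 + w 6,
      (-1)*w 5 + w 6] := by
  unfold Tact
  rw [ymul, xmul]
  funext j
  fin_cases j <;> (simp only [v7_0, v7_1, v7_2, v7_3, v7_4, v7_5, v7_6, v7m_0, v7m_1, v7m_2, v7m_3, v7m_4, v7m_5, v7m_6, Matrix.of_apply, Pi.add_apply, Pi.sub_apply, Pi.smul_apply, Pi.neg_apply, smul_eq_mul, fm0, fm1, fm2, fm3, fm4, fm5, fm6]; try ring)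

lemma t2 (a b : F) (w : Fin 7 → F) : Tact a b (Tact a b w) = ![(a)*w 3 + (1+ -1*a)*w 4,
      (-1)*w 2 + (a)*w 3 + (1+ -1*a)*w 4 + (2+ -1*b)*w 5 + (-1+b)*w 6,
      w 5,
      w 0 + (-1)*w 2 + (a)*w 5 + (-1+b)*w 6,
      (-1)*w 3 + w 4 + w 5 + (-1)*w 6,
      w 1 + (-1)*w 2 + (-1)*w 3 + w 4 + w 5,
      (-1)*w 3 + w 4] := by
  rw [t1 a b w, t1]
  funext j
  fin_cases j <;> (simp only [v7_0, v7_1, v7_2, v7_3, v7_4, v7_5, v7_6, v7m_0, v7m_1, v7m_2, v7m_3, v7m_4, v7m_5, v7m_6, Matrix.of_apply, Pi.add_apply, Pi.sub_apply, Pi.smul_apply, Pi.neg_apply, smul_eq_mul, fm0, fm1, fm2, fm3, fm4, fm5, fm6]; try ring)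

lemma t3 (a b : F) (w : Fin 7 → F) :
    Tact a b (Tact a b (Tact a b w)) = ![(a)*w 1 + (-1*a)*w 2 + (-1+a)*w 5,
      (a)*w 1 + (-1*a)*w 2 + (2+ -1*b)*w 3 + (-1+b)*w 4 + (-2+a)*w 5 + w 6,
      w 3 + (-1)*w 4 + (-1)*w 5 + w 6,
      (-1)*w 2 + (a)*w 3 + (1+ -1*a)*w 4 + (1+ -1*b)*w 5 + (-1+b)*w 6,
      (-1)*w 1 + w 2 + w 3 + (-1)*w 4 + (-1)*w 5,
      w 0 + (-1)*w 1 + w 3 + (-1)*w 4 + (-2+a)*w 5 + (b)*w 6,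
      (-1)*w 1 + w 2 + (-1)*w 5] := by
  rw [t2 a b w, t1]
  funext j
  fin_cases j <;> (simp only [v7_0, v7_1, v7_2, v7_3, v7_4, v7_5, v7_6, v7m_0, v7m_1, v7m_2, v7m_3, v7m_4, v7m_5, v7m_6, Matrix.of_apply, Pi.add_apply, Pi.sub_apply, Pi.smul_apply, Pi.neg_apply, smul_eq_mul, fm0, fm1, fm2, fm3, fm4, fm5, fm6]; try ring)

lemma t4 (a b : F) (w : Fin 7 → F) :
    Tact a b (Tact a b (Tact a b (Tact a b w))) = ![(a)*w 0 + (-1*a)*w 2 + (-1+a)*w 3 + (1+ -1*a)*w 4 + (1+ -1*a+a^2)*w 5 + (-1+a*b)*w 6,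
      (a)*w 0 + (2+ -1*b)*w 1 + (-2+b+ -1*a)*w 2 + (-2+a)*w 3 + (2+ -1*a)*w 4 + (2+ -1*b+ -1*a+a^2)*w 5 + (-1+a*b)*w 6,
      w 1 + (-1)*w 2 + (-1)*w 3 + w 4 + w 5,
      (a)*w 1 + (-1*a)*w 2 + (1+ -1*b)*w 3 + (b)*w 4 + (-1+a)*w 5,
      (-1)*w 0 + w 1 + (-1)*w 3 + w 4 + (2+ -1*a)*w 5 + (-1*b)*w 6,
      (-1)*w 0 + w 1 + (-1)*w 2 + (-2+a)*w 3 + (3+ -1*a)*w 4 + (3+ -1*b+ -1*a)*w 5 + (-1)*w 6,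
      (-1)*w 0 + w 2 + (-1)*w 3 + w 4 + (1+ -1*a)*w 5 + (-1*b)*w 6] := by
  rw [t3 a b w, t1]
  funext j
  fin_cases j <;> (simp only [v7_0, v7_1, v7_2, v7_3, v7_4, v7_5, v7_6, v7m_0, v7m_1, v7m_2, v7m_3, v7m_4, v7m_5, v7m_6, Matrix.of_apply, Pi.add_apply, Pi.sub_apply, Pi.smul_apply, Pi.neg_apply, smul_eq_mul, fm0, fm1, fm2, fm3, fm4, fm5, fm6]; try ring)

lemma t5 (a b : F) (w : Fin 7 → F) :
    Tact a b (Tact a b (Tact a b (Tact a b (Tact a b w)))) = ![(-1+a)*w 1 + (1+ -2*a)*w 2 + (1+ -1*a+a^2)*w 3 + (-1+2*a+ -1*a^2)*w 4 + (-1+2*a+ -1*a*b)*w 5 + (-1*a+a*b)*w 6,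
      (2+ -1*b)*w 0 + (-2+a)*w 1 + (b+ -2*a)*w 2 + (2+ -1*b+ -1*a+a^2)*w 3 + (-2+b+2*a+ -1*a^2)*w 4 + (-3+b+4*a+ -2*a*b)*w 5 + (-1+2*b+ -1*b^2+ -1*a+a*b)*w 6,
      w 0 + (-1)*w 1 + w 3 + (-1)*w 4 + (-2+a)*w 5 + (b)*w 6,
      (a)*w 0 + (1+ -1*b)*w 1 + (-1+b+ -1*a)*w 2 + (-1+a)*w 3 + (1+ -1*a)*w 4 + (1+ -1*b+ -1*a+a^2)*w 5 + (-1+a*b)*w 6,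
      w 0 + (-1)*w 1 + w 2 + (2+ -1*a)*w 3 + (-3+a)*w 4 + (-3+b+a)*w 5 + w 6,
      w 0 + (-2+a)*w 1 + (2+ -1*a)*w 2 + (3+ -1*b+ -1*a)*w 3 + (-3+b+a)*w 4 + (-5+b+2*a)*w 5 + w 6,
      (-1)*w 1 + (2)*w 2 + (1+ -1*a)*w 3 + (-2+a)*w 4 + (-2+b)*w 5 + (1+ -1*b)*w 6] := by
  rw [t4 a b w, t1]
  funext j
  fin_cases j <;> (simp only [v7_0, v7_1, v7_2, v7_3, v7_4, v7_5, v7_6, v7m_0, v7m_1, v7m_2, v7m_3, v7m_4, v7m_5, v7m_6, Matrix.of_apply, Pi.add_apply, Pi.sub_apply, Pi.smul_apply, Pi.neg_apply, smul_eq_mul, fm0, fm1, fm2, fm3, fm4, fm5, fm6]; try ring)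

lemma t7 (a b : F) (w : Fin 7 → F) :
    Tact a b (Tact a b (Tact a b (Tact a b (Tact a b (Tact a b (Tact a b w)))))) = ![(1+ -1*a+a^2)*w 0 + (-1+2*a+ -1*a*b)*w 1 + (1+ -2*a+a*b+ -1*a^2)*w 2 + (2+ -4*a+2*a^2)*w 3 + (-3+5*a+ -2*a^2)*w 4 + (-3+b+5*a+ -2*a*b+ -2*a^2+a^3)*w 5 + (1+ -2*a+a^2*b)*w 6,
      (2+ -1*b+ -1*a+a^2)*w 0 + (-3+b+4*a+ -2*a*b)*w 1 + (3+ -4*a+2*a*b+ -1*a^2)*w 2 + (6+ -4*b+b^2+ -5*a+2*a^2)*w 3 + (-6+3*b+ -1*b^2+6*a+ -2*a^2)*w 4 + (-9+5*b+8*a+ -4*a*b+ -2*a^2+a^3)*w 5 + (2+ -1*b^2+ -2*a+a^2*b)*w 6,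
      w 0 + (-2+a)*w 1 + (2+ -1*a)*w 2 + (3+ -1*b+ -1*a)*w 3 + (-3+b+a)*w 4 + (-5+b+2*a)*w 5 + w 6,
      (-1+a)*w 0 + (1+ -1*b+ -1*a+a^2)*w 1 + (-1+2*b+ -1*a^2)*w 2 + (-1+b+3*a+ -2*a*b)*w 3 + (2+ -2*b+ -2*a+2*a*b)*w 4 + (3+ -3*b+b^2+ -4*a+2*a^2)*w 5 + (-1+b+ -1*b^2+a*b)*w 6,
      (2+ -1*a)*w 0 + (-3+b+a)*w 1 + (2+ -1*b)*w 2 + (5+ -1*b+ -2*a)*w 3 + (-5+b+2*a)*w 4 + (-7+2*b+4*a+ -1*a^2)*w 5 + (2+b+ -1*a*b)*w 6,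
      (3+ -1*b+ -1*a)*w 0 + (-5+b+2*a)*w 1 + (4+ -2*a)*w 2 + (7+ -2*b+ -4*a+a^2)*w 3 + (-8+2*b+5*a+ -1*a^2)*w 4 + (-10+4*b+7*a+ -2*a*b+ -1*a^2)*w 5 + (2+b+ -1*b^2+ -1*a)*w 6,
      (1+ -1*a)*w 0 + (-2+b)*w 1 + (2+ -1*b+a)*w 2 + (3+ -2*a)*w 3 + (-4+2*a)*w 4 + (-4+2*b+2*a+ -1*a^2)*w 5 + (2+ -1*a*b)*w 6] := by
  rw [t4 a b w, t3]
  funext j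
  fin_cases j <;> (simp only [v7_0, v7_1, v7_2, v7_3, v7_4, v7_5, v7_6, v7m_0, v7m_1, v7m_2, v7m_3, v7m_4, v7m_5, v7m_6, Matrix.of_apply, Pi.add_apply, Pi.sub_apply, Pi.smul_apply, Pi.neg_apply, smul_eq_mul, fm0, fm1, fm2, fm3, fm4, fm5, fm6]; try ring)

/-- Cayley–Hamilton instance for `x*y`. -/
lemma CH (a b : F) (w : Fin 7 → F) :
    Tact a b (Tact a b (Tact a b (Tact a b (Tact a b (Tact a b (Tact a b w)))))) =
      Tact a b (Tact a b (Tact a b (Tact a b (Tact a b w))))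
      + (a - 1) • Tact a b (Tact a b (Tact a b (Tact a b w)))
      + (1 - b) • Tact a b (Tact a b (Tact a b w))
      - Tact a b (Tact a b w) + w := by
  rw [t7, t5, t4, t3, t2]
  funext j
  fin_cases j <;> (simp only [v7_0, v7_1, v7_2, v7_3, v7_4, v7_5, v7_6, v7m_0, v7m_1, v7m_2, v7m_3, v7m_4, v7m_5, v7m_6, Matrix.of_apply, Pi.add_apply, Pi.sub_apply, Pi.smul_apply, Pi.neg_apply, smul_eq_mul, fm0, fm1, fm2, fm3, fm4, fm5, fm6]; try ring)





lemma P1 (a b : F)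
    (hi : a ^ 2 - a * b + b ^ 2 + 2 * a + 2 * b + 4 ≠ 0)
    (hii : (a + b) ^ 3 - 8 * (a + b - 2) ^ 2 - 8 * (a * b) ≠ 0)
    (w : Fin 7 → F) (hw : w ≠ 0) (d e : F)
    (h1 : Matrix.mulVec !![1,0,-1,0,-1,0,a+b-1; 0,0,-1,0,0,0,0; 0,1,-1,0,0,0,0; 0,0,0,0,-1,0,0;
      0,0,0,1,-1,0,0; 0,0,0,0,0,0,-1; 0,0,0,0,0,1,-1] w = d • w)
    (h2 : Matrix.mulVec !![1,0,-1,0,-1,0,a+b-1; 0,0,-1,0,0,0,0; 0,1,-1,0,0,0,0; 0,0,0,0,-1,0,0;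
      0,0,0,1,-1,0,0; 0,0,0,0,0,0,-1; 0,0,0,0,0,1,-1] (Matrix.mulVec !![0,1,0,0,0,0,a; 1,0,0,0,0,0,a; 0,0,0,1,0,0,0; 0,0,1,0,0,0,0;
      0,0,0,0,0,1,-1; 0,0,0,0,1,0,-1; 0,0,0,0,0,0,-1] w)
        = e • (Matrix.mulVec !![0,1,0,0,0,0,a; 1,0,0,0,0,0,a; 0,0,0,1,0,0,0; 0,0,1,0,0,0,0;
      0,0,0,0,0,1,-1; 0,0,0,0,1,0,-1; 0,0,0,0,0,0,-1] w)) : False := by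
  rw [ymul] at h1
  rw [xmul, ymul] at h2
  have e0 := congrFun h1 0
  have e1 := congrFun h1 1
  have e2 := congrFun h1 2
  have e3 := congrFun h1 3
  have e4 := congrFun h1 4
  have e5 := congrFun h1 5
  have e6 := congrFun h1 6
  have f0 := congrFun h2 0
  have f1 := congrFun h2 1
  have f2 := congrFun h2 2
  have f3 := congrFun h2 3
  have f4 := congrFun h2 4
  have f5 := congrFun h2 5
  have f6 := congrFun h2 6
  simp only [v7_0, v7_1, v7_2, v7_3, v7_4, v7_5, v7_6, Pi.smul_apply, smul_eq_mul] at e0 e1 e2 e3 e4 e5 e6 f0 f1 f2 f3 f4 f5 f6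
  have E0 : w 0 - w 2 - w 4 + (a+b-1)*w 6 - d*w 0 = 0 := by linear_combination e0
  have E1 : w 2 + d*w 1 = 0 := by linear_combination -e1
  have E2 : w 1 - w 2 - d*w 2 = 0 := by linear_combination e2
  have E3 : w 4 + d*w 3 = 0 := by linear_combination -e3
  have E4 : w 3 - w 4 - d*w 4 = 0 := by linear_combination e4
  have E5 : w 6 + d*w 5 = 0 := by linear_combination -e5
  have E6 : w 5 - w 6 - d*w 6 = 0 := by linear_combination e6
  have F0 : w 1 + a*w 6 - w 3 - (w 5 - w 6) - (a+b-1)*w 6 - e*(w 1 + a*w 6) = 0 := by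
    linear_combination f0
  have F1 : w 3 + e*(w 0 + a*w 6) = 0 := by linear_combination -f1
  have F2 : w 0 + a*w 6 - w 3 - e*w 3 = 0 := by linear_combination f2
  have F3 : w 5 - w 6 + e*w 2 = 0 := by linear_combination -f3
  have F4 : w 2 - (w 5 - w 6) - e*(w 5 - w 6) = 0 := by linear_combination f4
  have F5 : -w 6 + e*(w 4 - w 6) = 0 := by linear_combination -f5
  have F6 : w 4 + e*w 6 = 0 := by linear_combination f6
  by_cases hr : 1 + d + d^2 = 0
  · have hd0 : d ≠ 0 := fun h => one_ne_zero (α := F) (by linear_combination hr - (1+d)*h)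
    have hd3 : d^3 = 1 := by linear_combination (d-1)*hr
    by_cases hre : 1 + e + e^2 = 0
    · have he0 : e ≠ 0 := fun h => one_ne_zero (α := F) (by linear_combination hre - (1+e)*h)
      have he3 : e^3 = 1 := by linear_combination (e-1)*hre
      have G1 : (1+d)*w 5 - e*d*w 1 = 0 := by linear_combination F3 + E5 - e*E1
      have hW5 : w 5 + e*d^2*w 1 = 0 := by linear_combination w 5*hr - d*G1
      have G2 : d*w 5 + e*d*w 5 - e*d*w 3 = 0 := by linear_combination F5 + E5 + e*E5 - e*E3
      have HW3 : (e*d) * (w 3 - e^2*d^2*w 1) = 0 := by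
        linear_combination -G2 + (d*(1+e))*hW5 - (e*d^3*w 1)*hre
      have hW3 : w 3 - e^2*d^2*w 1 = 0 :=
        (mul_eq_zero.mp HW3).resolve_left (mul_ne_zero he0 hd0)
      have HW0 : e * (w 0 + e*(d^2+a)*w 1) = 0 := by
        linear_combination F1 - hW3 - (a*e)*E5 + (a*e*d)*hW5 - (a*e^2*w 1)*hd3
      have hW0 : w 0 + e*(d^2+a)*w 1 = 0 := (mul_eq_zero.mp HW0).resolve_left he0
      have hw1 : w 1 ≠ 0 := by
        intro h
        have z5 : w 5 = 0 := by linear_combination hW5 - e*d^2*h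
        have z3 : w 3 = 0 := by linear_combination hW3 + e^2*d^2*h
        have z0 : w 0 = 0 := by linear_combination hW0 - e*(d^2+a)*h
        have z2 : w 2 = 0 := by linear_combination E1 - d*h
        have z4 : w 4 = 0 := by linear_combination E3 - d*z3
        have z6 : w 6 = 0 := by linear_combination E5 - d*z5
        apply hw
        funext j
        fin_cases j
        exacts [z0, h, z2, z3, z4, z5, z6]
      have HI0 : (-1 + d + d*e + b*e + a*(d*e)) * w 1 = 0 := by
        linear_combination E0 - (1-d)*hW0 + E1 + E3 - d*hW3 - (a+b-1)*E5 - (d - b*d - a*d)*hW5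
          - (w 1*(-e - e^2 + d*e^2 - b*e + b*(d*e) - a*e + a*(d*e)))*hr - (w 1)*hre
      have HII0 : (a + a*e - e - d - 2*(d*e) - b*e) * w 1 = 0 := by
        linear_combination F0 + hW3 - (2 - b - a*e)*E5 - (-1 - 2*d + b*d + a*(d*e))*hW5
          - (w 1*(-e - e^2 + 2*(d*e) + b*e - b*(d*e) + a*e^2 - a*(d*e^2)))*hr - (w 1*(1 + d - a))*hre
      have hEq1 : -1 + d + d*e + b*e + a*(d*e) = 0 := (mul_eq_zero.mp HI0).resolve_right hw1
      have hEq2 : a + a*e - e - d - 2*(d*e) - b*e = 0 := (mul_eq_zero.mp HII0).resolve_right hw1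
      have hsplit : (d - e) * (1 + d + e) = 0 := by linear_combination hr - hre
      rcases mul_eq_zero.mp hsplit with hde | hde
      · have hfin : a*d + 2*d + b + 2 = 0 := by
          linear_combination d^2*hEq1 + (d^3 + b*d^2 + a*d^3)*hde
            + (2 - d^2 + b - b*d + a*d - a*d^2)*hr
        exact hi (by linear_combination (a+2)^2*hr + (b - a - d*(a+2))*hfin)
      · have P1e : a + d - b - b*d = 0 := by
          linear_combination hEq1 - (d + b + a*d)*hde + (1+a)*hr
        have P2e : -1 + b + b*d - a*d = 0 := by
          linear_combination hEq2 - (-1 - 2*d - b + a)*hde - 2*hr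
        have hfac : (a - 1) * (1 - d) = 0 := by linear_combination P1e + P2e
        rcases mul_eq_zero.mp hfac with ha1 | hd1
        · have ha : a = 1 := by linear_combination ha1
          have hfac2 : (1 + d) * (1 - b) = 0 := by linear_combination P1e - ha1
          rcases mul_eq_zero.mp hfac2 with hd2 | hb1
          · exact one_ne_zero (α := F) (by linear_combination hr - d*hd2)
          · have hb : b = 1 := by linear_combination -hb1
            exact hii (by rw [ha, hb]; norm_num)
        · have h3 : (3:F) = 0 := by linear_combination hr + (d+2)*hd1
          have hS : a + 1 - 2*b = 0 := by linear_combination P1e + (1-b)*hd1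
          exact hi (by linear_combination (b^2+b+1)*h3 + (a+b+1)*hS)
    · have Q1 : (w 0 + a*w 6) * (1+e+e^2) = 0 := by linear_combination F2 + (1+e)*F1
      have hu1 : w 0 + a*w 6 = 0 := (mul_eq_zero.mp Q1).resolve_right hre
      have Q3 : w 2 * (1+e+e^2) = 0 := by linear_combination F4 + (1+e)*F3
      have hu3 : w 2 = 0 := (mul_eq_zero.mp Q3).resolve_right hre
      have Q5 : (w 4 - w 6) * (1+e+e^2) = 0 := by linear_combination F6 + (1+e)*F5
      have hu5 : w 4 - w 6 = 0 := (mul_eq_zero.mp Q5).resolve_right hre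
      have z3 : w 3 = 0 := by linear_combination F1 - e*hu1
      have z6 : w 6 = 0 := by linear_combination -F5 + e*hu5
      have z5 : w 5 = 0 := by linear_combination F3 + z6 - e*hu3
      have z4 : w 4 = 0 := by linear_combination hu5 + z6
      have hdw1 : d * w 1 = 0 := by linear_combination E1 - hu3
      have z1 : w 1 = 0 := (mul_eq_zero.mp hdw1).resolve_left hd0
      have z0 : w 0 = 0 := by linear_combination hu1 - a*z6
      apply hw
      funext j
      fin_cases j
      exacts [z0, z1, hu3, z3, z4, z5, z6]
  · have q1 : w 1 * (1+d+d^2) = 0 := by linear_combination E2 + (1+d)*E1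
    have z1 : w 1 = 0 := (mul_eq_zero.mp q1).resolve_right hr
    have q3 : w 3 * (1+d+d^2) = 0 := by linear_combination E4 + (1+d)*E3
    have z3 : w 3 = 0 := (mul_eq_zero.mp q3).resolve_right hr
    have q5 : w 5 * (1+d+d^2) = 0 := by linear_combination E6 + (1+d)*E5
    have z5 : w 5 = 0 := (mul_eq_zero.mp q5).resolve_right hr
    have z2 : w 2 = 0 := by linear_combination E1 - d*z1
    have z4 : w 4 = 0 := by linear_combination E3 - d*z3
    have z6 : w 6 = 0 := by linear_combination E5 - d*z5
    have z0 : w 0 = 0 := by linear_combination F2 + (1+e)*z3 - a*z6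
    apply hw
    funext j
    fin_cases j
    exacts [z0, z1, z2, z3, z4, z5, z6]

end Dim7Aux

namespace Dim7Aux

variable {F : Type} [Field F]

lemma coeff6 {v : Module.Basis (Fin 7) F (Fin 7 → F)} {q1 q2 q3 q4 q5 q6 : F} {i1 i2 i3 i4 i5 i6 : Fin 7}
    (h : q1 • v i1 + q2 • v i2 + q3 • v i3 + q4 • v i4 + q5 • v i5 + q6 • v i6 = 0) (t : Fin 7) :
    (if i1 = t then q1 else 0) + (if i2 = t then q2 else 0) + (if i3 = t then q3 else 0)
      + (if i4 = t then q4 else 0) + (if i5 = t then q5 else 0) + (if i6 = t then q6 else 0) = 0 := by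
  have h' := congrArg (fun z => v.repr z t) h
  simpa [Finsupp.single_apply] using h'

end Dim7Aux

open Dim7Aux in
/-- **The dimension-7 group is not monomial.** Let `F` be a field and `a, b ∈ F`
satisfying Conditions (i) and (ii), and let `x, y` be the matrices of the dimension-7
setup. There is no basis `(v₁, …, v₇)` of `F⁷` such that both `x` and `y` send each basis
vector to a scalar multiple of a basis vector. -/
theorem dim7_generators_not_monomial (F : Type) [Field F] (a b : F)
    (hi : a ^ 2 - a * b + b ^ 2 + 2 * a + 2 * b + 4 ≠ 0)
    (hii : (a + b) ^ 3 - 8 * (a + b - 2) ^ 2 - 8 * (a * b) ≠ 0)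
    (x y : Matrix (Fin 7) (Fin 7) F)
    (hx : x = !![0,1,0,0,0,0,a; 1,0,0,0,0,0,a; 0,0,0,1,0,0,0; 0,0,1,0,0,0,0;
      0,0,0,0,0,1,-1; 0,0,0,0,1,0,-1; 0,0,0,0,0,0,-1])
    (hy : y = !![1,0,-1,0,-1,0,a+b-1; 0,0,-1,0,0,0,0; 0,1,-1,0,0,0,0; 0,0,0,0,-1,0,0;
      0,0,0,1,-1,0,0; 0,0,0,0,0,0,-1; 0,0,0,0,0,1,-1]) :
    ¬ ∃ v : Module.Basis (Fin 7) F (Fin 7 → F),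
        (∀ i : Fin 7, ∃ (j : Fin 7) (c : F), x.mulVec (v i) = c • v j) ∧
        (∀ i : Fin 7, ∃ (j : Fin 7) (c : F), y.mulVec (v i) = c • v j) := by
  rintro ⟨v, hvx, hvy⟩
  subst hx
  subst hy
  choose σ cc hc using hvx
  choose τ dd hd using hvy
  have huniq : ∀ (r : F) (i j : Fin 7), r • v i = v j → i = j := by
    intro r i j h
    by_contra hne
    have h' := congrArg (fun z => v.repr z j) h
    simp [Module.Basis.repr_self, Finsupp.single_apply, hne] at h'
  have hkey : ∀ i, (cc i * cc (σ i)) • v (σ (σ i)) = v i := by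
    intro i
    have h := xx a (v i)
    rw [hc i, Matrix.mulVec_smul, hc (σ i), smul_smul] at h
    exact h
  have hcne : ∀ i, cc i ≠ 0 := by
    intro i h0
    have h := hkey i
    rw [h0, zero_mul, zero_smul] at h
    exact v.ne_zero i h.symm
  have hss : ∀ i, σ (σ i) = i := fun i => huniq _ _ _ (hkey i)
  have hkey3 : ∀ i, (dd i * dd (τ i) * dd (τ (τ i))) • v (τ (τ (τ i))) = v i := by
    intro i
    have h := yyy a b (v i)
    rw [hd i, Matrix.mulVec_smul, hd (τ i), Matrix.mulVec_smul, Matrix.mulVec_smul,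
      hd (τ (τ i)), smul_smul, smul_smul] at h
    exact h
  have hdne : ∀ i, dd i ≠ 0 := by
    intro i h0
    have h := hkey3 i
    rw [h0, zero_mul, zero_mul, zero_smul] at h
    exact v.ne_zero i h.symm
  have ht3 : ∀ i, τ (τ (τ i)) = i := fun i => huniq _ _ _ (hkey3 i)
  have htinj : ∀ p q, τ p = τ q → p = q := by
    intro p q h
    have h2 := congrArg (fun z => τ (τ z)) h
    rw [ht3 p, ht3 q] at h2
    exact h2
  have hsinj : ∀ p q, σ p = σ q → p = q := by
    intro p q h
    have h2 := congrArg σ h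
    rw [hss p, hss q] at h2
    exact h2
  have hstep : ∀ p q, σ (τ p) = σ (τ q) → p = q := fun p q h => htinj _ _ (hsinj _ _ h)
  obtain ⟨ee, hene, he⟩ : ∃ ee : Fin 7 → F, (∀ i, ee i ≠ 0) ∧
      (∀ i, Tact a b (v i) = ee i • v (σ (τ i))) := by
    refine ⟨fun i => dd i * cc (τ i), fun i => mul_ne_zero (hdne i) (hcne (τ i)), fun i => ?_⟩
    show Matrix.mulVec _ (Matrix.mulVec _ (v i)) = _
    rw [hd i, Matrix.mulVec_smul, hc (τ i), smul_smul]
  have hrr : ∀ i, σ (τ (σ (τ i))) = i := by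
    intro j0
    by_contra hne2
    set j1 := σ (τ j0) with hj1
    set j2 := σ (τ j1) with hj2
    set j3 := σ (τ j2) with hj3
    set j4 := σ (τ j3) with hj4
    set j5 := σ (τ j4) with hj5
    set j6 := σ (τ j5) with hj6
    set j7 := σ (τ j6) with hj7
    have hne1 : j1 ≠ j0 := by
      intro h
      apply hne2
      calc j2 = σ (τ j1) := hj2
        _ = σ (τ j0) := by rw [h]
        _ = j1 := hj1.symm
        _ = j0 := h
    have d21 : j2 ≠ j1 := fun h => hne1 (hstep _ _ (by rw [← hj2, ← hj1]; exact h))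
    have d31 : j3 ≠ j1 := fun h => hne2 (hstep _ _ (by rw [← hj3, ← hj1]; exact h))
    have d32 : j3 ≠ j2 := fun h => d21 (hstep _ _ (by rw [← hj3, ← hj2]; exact h))
    have d42 : j4 ≠ j2 := fun h => d31 (hstep _ _ (by rw [← hj4, ← hj2]; exact h))
    have d43 : j4 ≠ j3 := fun h => d32 (hstep _ _ (by rw [← hj4, ← hj3]; exact h))
    have d53 : j5 ≠ j3 := fun h => d42 (hstep _ _ (by rw [← hj5, ← hj3]; exact h))
    have d54 : j5 ≠ j4 := fun h => d43 (hstep _ _ (by rw [← hj5, ← hj4]; exact h))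
    have d64 : j6 ≠ j4 := fun h => d53 (hstep _ _ (by rw [← hj6, ← hj4]; exact h))
    have d75 : j7 ≠ j5 := fun h => d64 (hstep _ _ (by rw [← hj7, ← hj5]; exact h))
    have k1 : Tact a b (v j0) = ee j0 • v j1 := by rw [hj1]; exact he j0
    have k2 : Tact a b (Tact a b (v j0)) = (ee j0 * ee j1) • v j2 := by
      rw [k1, Tact_smul, he j1, ← hj2, smul_smul]
    have k3 : Tact a b (Tact a b (Tact a b (v j0))) = (ee j0 * ee j1 * ee j2) • v j3 := by
      rw [k2, Tact_smul, he j2, ← hj3, smul_smul]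
    have k4 : Tact a b (Tact a b (Tact a b (Tact a b (v j0))))
        = (ee j0 * ee j1 * ee j2 * ee j3) • v j4 := by
      rw [k3, Tact_smul, he j3, ← hj4, smul_smul]
    have k5 : Tact a b (Tact a b (Tact a b (Tact a b (Tact a b (v j0)))))
        = (ee j0 * ee j1 * ee j2 * ee j3 * ee j4) • v j5 := by
      rw [k4, Tact_smul, he j4, ← hj5, smul_smul]
    have k6 : Tact a b (Tact a b (Tact a b (Tact a b (Tact a b (Tact a b (v j0))))))
        = (ee j0 * ee j1 * ee j2 * ee j3 * ee j4 * ee j5) • v j6 := by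
      rw [k5, Tact_smul, he j5, ← hj6, smul_smul]
    have k7 : Tact a b (Tact a b (Tact a b (Tact a b (Tact a b (Tact a b (Tact a b (v j0)))))))
        = (ee j0 * ee j1 * ee j2 * ee j3 * ee j4 * ee j5 * ee j6) • v j7 := by
      rw [k6, Tact_smul, he j6, ← hj7, smul_smul]
    have hsub := sub_eq_zero_of_eq (CH a b (v j0))
    rw [k7, k5, k4, k3, k2] at hsub
    have hM : (ee j0 * ee j1 * ee j2 * ee j3 * ee j4 * ee j5 * ee j6) • v j7
        + (-(ee j0 * ee j1 * ee j2 * ee j3 * ee j4)) • v j5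
        + (-((a - 1) * (ee j0 * ee j1 * ee j2 * ee j3))) • v j4
        + (-((1 - b) * (ee j0 * ee j1 * ee j2))) • v j3
        + (ee j0 * ee j1) • v j2 + (-1 : F) • v j0 = 0 := by
      rw [← hsub]; module
    by_cases h3 : j3 = j0
    · have g4 : j4 = j1 := by rw [hj4, h3, ← hj1]
      have g5 : j5 = j2 := by rw [hj5, g4, ← hj2]
      have g6 : j6 = j0 := by rw [hj6, g5, ← hj3]; exact h3
      have g7 : j7 = j1 := by rw [hj7, g6, ← hj1]
      rw [h3, g4, g5, g6, g7] at hM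
      have q1 := coeff6 hM j1
      rw [if_pos rfl, if_neg d21, if_pos rfl, if_neg (Ne.symm hne1), if_neg d21,
        if_neg (Ne.symm hne1)] at q1
      have q2 := coeff6 hM j2
      rw [if_neg (Ne.symm d21), if_pos rfl, if_neg (Ne.symm d21), if_neg (Ne.symm hne2),
        if_pos rfl, if_neg (Ne.symm hne2)] at q2
      have q3 := coeff6 hM j0
      rw [if_neg hne1, if_neg hne2, if_neg hne1, if_pos rfl, if_neg hne2, if_pos rfl] at q3
      have hfac : (ee j0 * ee j1) * (ee j0 * ee j1 * ee j2 - 1) = 0 := by linear_combination -q2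
      have hP : ee j0 * ee j1 * ee j2 - 1 = 0 :=
        (mul_eq_zero.mp hfac).resolve_left (mul_ne_zero (hene j0) (hene j1))
      have hfa : ee j0 * (2 - a) = 0 := by
        linear_combination q1 + (ee j0 * (a - (ee j0 * ee j1 * ee j2) - 2)) * hP
      have ha : a = 2 := by
        have h' := (mul_eq_zero.mp hfa).resolve_left (hene j0)
        linear_combination -h'
      have hb : b = 2 := by linear_combination q3 + (1 - b) * hP
      exact hii (by rw [ha, hb]; norm_num)
    · by_cases h4 : j4 = j0
      · have g5 : j5 = j1 := by rw [hj5, h4, ← hj1]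
        have g6 : j6 = j2 := by rw [hj6, g5, ← hj2]
        have g7 : j7 = j3 := by rw [hj7, g6, ← hj3]
        rw [h4, g5, g6, g7] at hM
        have q := coeff6 hM j2
        rw [if_neg d32, if_neg (Ne.symm d21), if_neg (fun h => hne2 h.symm), if_neg d32,
          if_pos rfl, if_neg (fun h => hne2 h.symm)] at q
        exact (mul_ne_zero (hene j0) (hene j1)) (by linear_combination q)
      · by_cases h5 : j5 = j0
        · have g6 : j6 = j1 := by rw [hj6, h5, ← hj1]
          have g7 : j7 = j2 := by rw [hj7, g6, ← hj2]
          rw [h5, g6, g7] at hM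
          have q := coeff6 hM j4
          rw [if_neg (Ne.symm d42), if_neg (fun h => h4 h.symm), if_pos rfl,
            if_neg (Ne.symm d43), if_neg (Ne.symm d42), if_neg (fun h => h4 h.symm)] at q
          have hP4 : ee j0 * ee j1 * ee j2 * ee j3 ≠ 0 :=
            mul_ne_zero (mul_ne_zero (mul_ne_zero (hene j0) (hene j1)) (hene j2)) (hene j3)
          have ha : a = 1 := by
            have h' : (a - 1) * (ee j0 * ee j1 * ee j2 * ee j3) = 0 := by linear_combination -q
            have h'' := (mul_eq_zero.mp h').resolve_right hP4
            linear_combination h''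
          have q' := coeff6 hM j3
          rw [if_neg (Ne.symm d32), if_neg (fun h => h3 h.symm), if_neg d43, if_pos rfl,
            if_neg (Ne.symm d32), if_neg (fun h => h3 h.symm)] at q'
          have hP3 : ee j0 * ee j1 * ee j2 ≠ 0 :=
            mul_ne_zero (mul_ne_zero (hene j0) (hene j1)) (hene j2)
          have hb : b = 1 := by
            have h' : (1 - b) * (ee j0 * ee j1 * ee j2) = 0 := by linear_combination -q'
            have h'' := (mul_eq_zero.mp h').resolve_right hP3
            linear_combination -h''
          exact hii (by rw [ha, hb]; norm_num)
        · have d41 : j4 ≠ j1 := fun h => h3 (hstep _ _ (by rw [← hj4, ← hj1]; exact h))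
          have d52 : j5 ≠ j2 := fun h => d41 (hstep _ _ (by rw [← hj5, ← hj2]; exact h))
          have hP5 : ee j0 * ee j1 * ee j2 * ee j3 * ee j4 ≠ 0 :=
            mul_ne_zero (mul_ne_zero (mul_ne_zero (mul_ne_zero (hene j0) (hene j1)) (hene j2))
              (hene j3)) (hene j4)
          by_cases h6 : j6 = j0
          · have g7 : j7 = j1 := by rw [hj7, h6, ← hj1]
            have d51 : j5 ≠ j1 := fun h => h4 (hstep _ _ (by rw [← hj5, ← hj1]; exact h))
            rw [h6, g7] at hM
            have q := coeff6 hM j5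
            rw [if_neg (Ne.symm d51), if_pos rfl, if_neg (Ne.symm d54), if_neg (Ne.symm d53),
              if_neg (Ne.symm d52), if_neg (fun h => h5 h.symm)] at q
            exact hP5 (by linear_combination -q)
          · have q := coeff6 hM j5
            rw [if_neg d75, if_pos rfl, if_neg (Ne.symm d54), if_neg (Ne.symm d53),
              if_neg (Ne.symm d52), if_neg (fun h => h5 h.symm)] at q
            exact hP5 (by linear_combination -q)
  have hrel : ∀ p, τ p = p → τ (σ p) = σ p := by
    intro p hp
    have h1 := hrr p
    rw [hp] at h1
    have h2 := congrArg σ h1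
    rw [hss (τ (σ p))] at h2
    exact h2
  have hfix : ∃ p, τ p = p := by
    haveI : Fact (Nat.Prime 3) := ⟨by norm_num⟩
    let τe : Equiv.Perm (Fin 7) := ⟨τ, fun i => τ (τ i), fun i => ht3 i, fun i => ht3 i⟩
    have hpow : τe ^ 3 ^ 1 = 1 := by
      rw [pow_one]
      apply Equiv.ext
      intro i
      simp only [pow_succ, pow_zero, one_mul, Equiv.Perm.mul_apply, Equiv.Perm.one_apply,
        Equiv.coe_fn_mk, τe]
      exact ht3 i
    obtain ⟨p, hp⟩ := Equiv.Perm.exists_fixed_point_of_prime (p := 3) (n := 1) (α := Fin 7)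
      (by norm_num) hpow
    exact ⟨p, hp⟩
  obtain ⟨p, hp⟩ := hfix
  have htsp : τ (σ p) = σ p := hrel p hp
  refine P1 a b hi hii (v p) (v.ne_zero p) (dd p) (dd (σ p)) ?_ ?_
  · rw [hd p, hp]
  · rw [hc p, Matrix.mulVec_smul, hd (σ p), htsp, smul_smul, smul_smul, mul_comm]
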